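/- arXiv:2310.13597 — 3 statements merged into one kernel-verified Lean document; each statement's English description precedes it below -/
import Mathlib

section
/- Let $P_1, \dots, P_m$ be orthogonal projection operators on a finite-dimensional complex inner product space, and let $A = \frac{1}{m}\sum_{i=1}^m P_i$. If $\|P_i P_j\|_{op} \le \varepsilon$ for all $i \ne j$, then $\|A\|_{op} \le \frac{1}{m} + \sqrt{\varepsilon}$. -/
open scoped ComplexConjugate

lemma key_norm_le {E : Type*} [NormedAddCommGroup E] [InnerProductSpace ℂ E]
    [CompleteSpace E] (T : E →L[ℂ] E) (hT : T.IsPositive) (c : ℝ) (hc : 0 ≤ c)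
    (h : ∀ x, RCLike.re (inner ℂ (T x) x : ℂ) ≤ c * ‖x‖ ^ 2) : ‖T‖ ≤ c := by
  have hsym : ∀ x y : E, (inner ℂ (T x) y : ℂ) = inner ℂ x (T y) :=
    fun x y => hT.isSelfAdjoint.isSymmetric x y
  set cc : PreInnerProductSpace.Core ℂ E :=
    { inner := fun x y => (inner ℂ x (T y) : ℂ)
      conj_inner_symm := fun x y => by
        rw [inner_conj_symm]
        exact hsym x y
      re_inner_nonneg := fun x => by
        rw [← hsym]
        exact hT.2 x
      add_left := fun x y z => inner_add_left _ _ _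
      smul_left := fun x y r => inner_smul_left _ _ _ } with hcc
  have cdef : ∀ a b : E, (@inner ℂ E cc.toInner a b : ℂ) = (inner ℂ a (T b) : ℂ) :=
    fun a b => rfl
  refine T.opNorm_le_bound hc fun x => ?_
  have cs := InnerProductSpace.Core.inner_mul_inner_self_le (𝕜 := ℂ) (F := E) (c := cc) (T x) x
  rw [cdef, cdef, cdef, cdef, ← hsym, ← hsym, ← hsym, ← hsym] at cs
  -- cs : ‖⟪T(Tx), x⟫‖ * ‖⟪Tx, Tx⟫‖ ≤ re ⟪T(Tx), Tx⟫ * re ⟪Tx, x⟫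
  have e1 : (inner ℂ (T (T x)) x : ℂ) = inner ℂ (T x) (T x) := by rw [hsym, ← hsym]
  rw [e1, ← hsym x x] at cs
  have hn : ‖(inner ℂ (T x) (T x) : ℂ)‖ = ‖T x‖ ^ 2 := by
    rw [@inner_self_eq_norm_sq_to_K ℂ]
    simp
  rw [hn] at cs
  have h1 : RCLike.re (inner ℂ (T (T x)) (T x) : ℂ) ≤ c * ‖T x‖ ^ 2 := h (T x)
  have h2 : RCLike.re (inner ℂ (T x) x : ℂ) ≤ c * ‖x‖ ^ 2 := h x
  have p2 : 0 ≤ RCLike.re (inner ℂ (T x) x : ℂ) := hT.2 x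
  have h12 : RCLike.re (inner ℂ (T (T x)) (T x) : ℂ) * RCLike.re (inner ℂ (T x) x : ℂ)
      ≤ (c * ‖T x‖ ^ 2) * (c * ‖x‖ ^ 2) := by
    apply mul_le_mul h1 h2 p2 (by positivity)
  have key : ‖T x‖ ^ 2 * ‖T x‖ ^ 2 ≤ (c * ‖T x‖ ^ 2) * (c * ‖x‖ ^ 2) := le_trans cs h12
  by_contra hlt
  push_neg at hlt
  have hN : 0 < ‖T x‖ := lt_of_le_of_lt (by positivity) hlt
  nlinarith [mul_self_lt_mul_self (by positivity : (0:ℝ) ≤ c * ‖x‖) hlt, mul_pos hN hN]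

/-- If `P₁, …, Pₘ` are orthogonal projections on a finite-dimensional complex inner
product space with `‖Pᵢ Pⱼ‖ ≤ ε` for all `i ≠ j`, then the average `A = (1/m) ∑ Pᵢ`
satisfies `‖A‖ ≤ 1/m + √ε`. -/
theorem stmt0 {E : Type*} [NormedAddCommGroup E] [InnerProductSpace ℂ E]
    [FiniteDimensional ℂ E] (m : ℕ) (hm : 0 < m) (P : Fin m → E →L[ℂ] E)
    (hproj : ∀ i, IsSelfAdjoint (P i) ∧ (P i) ∘L (P i) = P i)
    (ε : ℝ)
    (hPP : ∀ i j, i ≠ j → ‖(P i) ∘L (P j)‖ ≤ ε) :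
    ‖(m : ℝ)⁻¹ • ∑ i, P i‖ ≤ (m : ℝ)⁻¹ + Real.sqrt ε := by
  set ε' : ℝ := max ε 0 with hε'
  have hε'0 : 0 ≤ ε' := le_max_right _ _
  set r : ℝ := Real.sqrt ε' with hr
  have hr0 : 0 ≤ r := Real.sqrt_nonneg _
  have hr2 : r ^ 2 = ε' := Real.sq_sqrt hε'0
  have hrε : Real.sqrt ε = r := by
    rcases le_total 0 ε with hle | hle
    · rw [hr, hε', max_eq_left hle]
    · rw [hr, hε', max_eq_right hle, Real.sqrt_zero,
        Real.sqrt_eq_zero_of_nonpos hle]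
  have hPP' : ∀ i j, i ≠ j → ‖(P i) ∘L (P j)‖ ≤ ε' :=
    fun i j hij => (hPP i j hij).trans (le_max_left _ _)
  set T : E →L[ℂ] E := ∑ i, P i with hT
  have hsymP : ∀ i, ∀ x y : E, (inner ℂ (P i x) y : ℂ) = inner ℂ x (P i y) :=
    fun i x y => (hproj i).1.isSymmetric x y
  have hidem : ∀ i, ∀ x : E, P i (P i x) = P i x := fun i x => by
    have := DFunLike.congr_fun (hproj i).2 x
    simpa using this
  have hPx : ∀ i, ∀ x : E, RCLike.re (inner ℂ (P i x) x : ℂ) = ‖P i x‖ ^ 2 := by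
    intro i x
    have : (inner ℂ (P i x) x : ℂ) = inner ℂ (P i x) (P i x) := by
      conv_lhs => rw [← hidem i x]
      rw [hsymP i (P i x) x]
    rw [this]
    exact inner_self_eq_norm_sq _
  have hTsym : (T : E →ₗ[ℂ] E).IsSymmetric := by
    intro x y
    simp only [ContinuousLinearMap.coe_coe, hT, ContinuousLinearMap.sum_apply, sum_inner,
      inner_sum]
    exact Finset.sum_congr rfl fun i _ => hsymP i x y
  have hS : ∀ x : E, RCLike.re (inner ℂ (T x) x : ℂ) = ∑ i, ‖P i x‖ ^ 2 := by
    intro x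
    simp only [hT, ContinuousLinearMap.sum_apply, sum_inner, map_sum]
    exact Finset.sum_congr rfl fun i _ => hPx i x
  have hTpos : T.IsPositive := by
    refine ⟨hTsym, fun x => ?_⟩
    show 0 ≤ RCLike.re (inner ℂ (T x) x : ℂ)
    rw [hS]
    positivity
  have hoff : ∀ (x : E) i j, i ≠ j → RCLike.re (inner ℂ (P i x) (P j x) : ℂ) ≤ ε' * ‖x‖ ^ 2 := by
    intro x i j hij
    calc RCLike.re (inner ℂ (P i x) (P j x) : ℂ) ≤ ‖(inner ℂ (P i x) (P j x) : ℂ)‖ :=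
          RCLike.re_le_norm _
      _ = ‖(inner ℂ x (((P i) ∘L (P j)) x) : ℂ)‖ := by rw [hsymP i x (P j x)]; rfl
      _ ≤ ‖x‖ * ‖((P i) ∘L (P j)) x‖ := norm_inner_le_norm _ _
      _ ≤ ‖x‖ * (‖(P i) ∘L (P j)‖ * ‖x‖) := by
          gcongr
          exact ContinuousLinearMap.le_opNorm _ _
      _ ≤ ‖x‖ * (ε' * ‖x‖) := by
          gcongr
          exact hPP' i j hij
      _ = ε' * ‖x‖ ^ 2 := by ring
  have hN2 : ∀ x : E, ‖T x‖ ^ 2 ≤ (∑ i, ‖P i x‖ ^ 2) + (m * m) * (ε' * ‖x‖ ^ 2) := by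
    intro x
    have expand : (‖T x‖ : ℝ) ^ 2 = ∑ i, ∑ j, RCLike.re (inner ℂ (P i x) (P j x) : ℂ) := by
      rw [← inner_self_eq_norm_sq (𝕜 := ℂ) (T x)]
      simp only [hT, ContinuousLinearMap.sum_apply, sum_inner, inner_sum, map_sum]
      rw [Finset.sum_comm]
    rw [expand]
    have bound : ∀ i : Fin m, ∑ j, RCLike.re (inner ℂ (P i x) (P j x) : ℂ)
        ≤ ‖P i x‖ ^ 2 + m * (ε' * ‖x‖ ^ 2) := by
      intro i
      rw [← Finset.add_sum_erase _ _ (Finset.mem_univ i)]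
      gcongr with j hj
      · exact le_of_eq (inner_self_eq_norm_sq _)
      · calc ∑ j ∈ Finset.univ.erase i, RCLike.re (inner ℂ (P i x) (P j x) : ℂ)
            ≤ ∑ j ∈ Finset.univ.erase i, ε' * ‖x‖ ^ 2 := by
              refine Finset.sum_le_sum fun j hj => ?_
              exact hoff x i j (Finset.ne_of_mem_erase hj).symm
          _ ≤ m * (ε' * ‖x‖ ^ 2) := by
              rw [Finset.sum_const, nsmul_eq_mul]
              have hcard : ((Finset.univ.erase i).card : ℝ) ≤ (m : ℝ) := by
                have := Finset.card_erase_le (s := (Finset.univ : Finset (Fin m))) (a := i)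
                simp only [Finset.card_univ, Fintype.card_fin] at this
                exact_mod_cast this
              have : (0:ℝ) ≤ ε' * ‖x‖ ^ 2 := by positivity
              nlinarith
    calc ∑ i, ∑ j, RCLike.re (inner ℂ (P i x) (P j x) : ℂ)
        ≤ ∑ i : Fin m, (‖P i x‖ ^ 2 + m * (ε' * ‖x‖ ^ 2)) := Finset.sum_le_sum fun i _ => bound i
      _ = (∑ i, ‖P i x‖ ^ 2) + m * (m * (ε' * ‖x‖ ^ 2)) := by
          rw [Finset.sum_add_distrib, Finset.sum_const, nsmul_eq_mul]
          simp [Finset.card_univ]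
      _ = (∑ i, ‖P i x‖ ^ 2) + (m * m) * (ε' * ‖x‖ ^ 2) := by ring
  have hTnorm : ‖T‖ ≤ 1 + m * r := by
    refine key_norm_le T hTpos _ (by positivity) fun x => ?_
    rw [hS]
    have hS0 : (0:ℝ) ≤ ∑ i, ‖P i x‖ ^ 2 := by positivity
    have hSN : ∑ i, ‖P i x‖ ^ 2 ≤ ‖T x‖ * ‖x‖ := by
      rw [← hS x]
      calc RCLike.re (inner ℂ (T x) x : ℂ) ≤ ‖(inner ℂ (T x) x : ℂ)‖ := RCLike.re_le_norm _
        _ ≤ ‖T x‖ * ‖x‖ := norm_inner_le_norm _ _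
    have h2 : ‖T x‖ ^ 2 ≤ (∑ i, ‖P i x‖ ^ 2) + (m * m) * (r ^ 2 * ‖x‖ ^ 2) := by
      rw [hr2]; exact hN2 x
    have hNa : ‖T x‖ ≤ (1 + m * r) * ‖x‖ := by
      by_contra hcon
      push_neg at hcon
      have hNpos : 0 < ‖T x‖ := lt_of_le_of_lt (by positivity) hcon
      nlinarith [mul_lt_mul_of_pos_left hcon hNpos,
        mul_le_mul_of_nonneg_left hcon.le
          (show (0:ℝ) ≤ (m:ℝ) * r * ‖x‖ by positivity), h2, hSN]
    nlinarith [hSN, mul_le_mul_of_nonneg_right hNa (norm_nonneg x)]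
  have hm0 : (0:ℝ) < (m:ℝ) := by exact_mod_cast hm
  calc ‖(m : ℝ)⁻¹ • T‖ = (m : ℝ)⁻¹ * ‖T‖ := by
        rw [show ‖(m : ℝ)⁻¹ • T‖ = ‖((m : ℝ)⁻¹ : ℝ)‖ * ‖T‖ from norm_smul _ T,
          Real.norm_eq_abs, abs_of_nonneg (by positivity)]
    _ ≤ (m : ℝ)⁻¹ * (1 + m * r) := by gcongr
    _ = (m : ℝ)⁻¹ + r := by field_simp
    _ = (m : ℝ)⁻¹ + Real.sqrt ε := by rw [hrε]
end

section
/- Let $M_0$ be the perfect matching $\{\{1,k+1\},\{2,k+2\},\dots,\{k,2k\}\}$ on $[2k]$, and for an indeterminate (or real) $D$ consider the sum over all perfect matchings $M$ of $[2k]$ of $D^{\mathrm{cc}(M \cup M_0)}$, where $\mathrm{cc}$ denotes the number of connected components of the multigraph with edge set $M \sqcup M_0$ on vertex set $[2k]$. Then this sum equals $(D+2k-2)(D+2k-4)\cdots(D+2)D$. -/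
open SimpleGraph Equiv
section
variable {V β : Type*} {G : SimpleGraph V}

lemma reach_eq (f : V → β) (h : ∀ v w, G.Adj v w → f v = f w) {v w : V}
    (r : G.Reachable v w) : f v = f w := by
  obtain ⟨p⟩ := r
  induction p with
  | nil => rfl
  | cons ha p ih => exact (h _ _ ha).trans ih

def ccLift (f : V → β) (h : ∀ v w, G.Adj v w → f v = f w) : G.ConnectedComponent → β :=
  Quot.lift f fun _ _ r => reach_eq f h r

@[simp] lemma ccLift_mk (f : V → β) (h) (v : V) :
    ccLift f h (G.connectedComponentMk v) = f v := rfl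
end

noncomputable def ccount {Y : Type*} (f σ : Equiv.Perm Y) : ℕ :=
  Nat.card (SimpleGraph.fromRel fun x y => f x = y ∨ σ x = y).ConnectedComponent

section main
variable {Y : Type*} [Fintype Y] [DecidableEq Y]

omit [Fintype Y] [DecidableEq Y] in
lemma pW (σ : Equiv.Perm Y) (v : Y) (hσ1 : ∀ x, σ (σ x) = x) :
    ∀ x, (σ x ≠ v ∧ σ x ≠ σ v) ↔ (x ≠ v ∧ x ≠ σ v) := by
  intro x
  refine Iff.symm ?_
  constructor
  · rintro ⟨h1, h2⟩
    refine ⟨fun he => h2 ?_, fun he => h1 (σ.injective he)⟩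
    have := congrArg σ he
    rwa [hσ1] at this
  · rintro ⟨h1, h2⟩
    exact ⟨fun he => h2 (by rw [he]), fun he => h1 (by rw [he, hσ1])⟩

lemma ccount_case_b (σ : Equiv.Perm Y) (v : Y) (hσ1 : ∀ x, σ (σ x) = x) (hσv : σ v ≠ v)
    (a : Y) (hav : a ≠ v) (hasv : a ≠ σ v) (hσa : σ a ≠ a)
    (h : Equiv.Perm Y) (hv : h v = σ v) (hsv : h (σ v) = v)
    (g : Equiv.Perm {x : Y // x ≠ v ∧ x ≠ σ v})
    (hg : ∀ x (hx : x ≠ v ∧ x ≠ σ v), h x = ↑(g ⟨x, hx⟩)) :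
    ccount h (Equiv.swap a (σ v) * σ * Equiv.swap a (σ v))
      = ccount g (σ.subtypePerm (pW σ v hσ1)) := by
  classical
  set τ := Equiv.swap a (σ v) with hτ
  set σ'' := τ * σ * τ with hσ''
  -- basic facts about σ''
  have hτv : τ v = v := Equiv.swap_apply_of_ne_of_ne (Ne.symm hav) (Ne.symm hσv)
  have hσav : σ a ≠ v := fun e => hasv (by rw [← hσ1 a, e])
  have hσasv : σ a ≠ σ v := fun e => hav (σ.injective e)
  have hτσa : τ (σ a) = σ a := Equiv.swap_apply_of_ne_of_ne hσa hσasv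
  have hs1 : σ'' v = a := by
    rw [hσ'', Perm.mul_apply, Perm.mul_apply, hτv, hτ, Equiv.swap_apply_right]
  have hs2 : σ'' a = v := by
    rw [hσ'', Perm.mul_apply, Perm.mul_apply, hτ, Equiv.swap_apply_left, hσ1, ← hτ, hτv]
  have hs3 : σ'' (σ v) = σ a := by
    rw [hσ'', Perm.mul_apply, Perm.mul_apply, hτ, Equiv.swap_apply_right, ← hτ, hτσa]
  have hs4 : σ'' (σ a) = σ v := by
    rw [hσ'', Perm.mul_apply, Perm.mul_apply, hτσa, hσ1, hτ, Equiv.swap_apply_left]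
  have hs5 : ∀ x, x ≠ v → x ≠ σ v → x ≠ a → x ≠ σ a → σ'' x = σ x := by
    intro x h1 h2 h3 h4
    rw [hσ'', Perm.mul_apply, Perm.mul_apply, hτ,
      Equiv.swap_apply_of_ne_of_ne h3 h2,
      Equiv.swap_apply_of_ne_of_ne (fun e => h4 (by rw [← hσ1 x, e])) (fun e => h1 (σ.injective e))]
  set GY := SimpleGraph.fromRel fun x y => h x = y ∨ σ'' x = y with hGY
  set GW := SimpleGraph.fromRel
    (fun x y : {x : Y // x ≠ v ∧ x ≠ σ v} => g x = y ∨ (σ.subtypePerm (pW σ v hσ1)) x = y)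
    with hGW
  have haW : a ≠ v ∧ a ≠ σ v := ⟨hav, hasv⟩
  have hσaW : σ a ≠ v ∧ σ a ≠ σ v := ⟨hσav, hσasv⟩
  set fY : Y → GW.ConnectedComponent := fun x =>
    if hxv : x = v then GW.connectedComponentMk ⟨a, haW⟩
    else if hxsv : x = σ v then GW.connectedComponentMk ⟨σ a, hσaW⟩
    else GW.connectedComponentMk ⟨x, hxv, hxsv⟩ with hfY
  have mkW : ∀ (w w' : {x : Y // x ≠ v ∧ x ≠ σ v}), (g w = w' ∨ σ ↑w = ↑w') →
      GW.connectedComponentMk w = GW.connectedComponentMk w' := by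
    intro w w' hr
    by_cases he : w = w'
    · rw [he]
    · apply SimpleGraph.ConnectedComponent.connectedComponentMk_eq_of_adj
      rw [hGW, SimpleGraph.fromRel_adj]
      refine ⟨he, Or.inl ?_⟩
      rcases hr with hr | hr
      · exact Or.inl hr
      · exact Or.inr (Subtype.ext hr)
  have fYv : fY v = GW.connectedComponentMk ⟨a, haW⟩ := dif_pos rfl
  have fYsv : fY (σ v) = GW.connectedComponentMk ⟨σ a, hσaW⟩ := by
    simp only [hfY]; rw [dif_neg hσv]; simp
  have fYW : ∀ x (hx : x ≠ v ∧ x ≠ σ v), fY x = GW.connectedComponentMk ⟨x, hx⟩ := by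
    intro x hx; simp only [hfY]; rw [dif_neg hx.1, dif_neg hx.2]
  have mkaσa : GW.connectedComponentMk ⟨a, haW⟩ = GW.connectedComponentMk ⟨σ a, hσaW⟩ :=
    mkW _ _ (Or.inr rfl)
  have aux : ∀ x y : Y, (h x = y ∨ σ'' x = y) → fY x = fY y := by
    intro x y hr
    by_cases hxv : x = v
    · subst hxv
      rcases hr with hr | hr
      · rw [← hr, hv, fYv, fYsv]; exact mkaσa
      · rw [← hr, hs1, fYv, fYW a haW]
    · by_cases hxsv : x = σ v
      · subst hxsv
        rcases hr with hr | hr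
        · rw [← hr, hsv, fYv, fYsv]; exact mkaσa.symm
        · rw [← hr, hs3, fYsv, fYW (σ a) hσaW]
      · have hx : x ≠ v ∧ x ≠ σ v := ⟨hxv, hxsv⟩
        rcases hr with hr | hr
        · have hy : y ≠ v ∧ y ≠ σ v := by rw [← hr, hg x hx]; exact (g ⟨x, hx⟩).2
          rw [fYW x hx, fYW y hy]
          exact mkW _ _ (Or.inl (Subtype.ext (by rw [← hg x hx, hr])))
        · by_cases hxa : x = a
          · have hy : y = v := by rw [← hr, hxa, hs2]
            rw [fYW x hx, hy, fYv]
            exact congrArg GW.connectedComponentMk (Subtype.ext hxa)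
          · by_cases hxσa : x = σ a
            · have hy : y = σ v := by rw [← hr, hxσa, hs4]
              rw [fYW x hx, hy, fYsv]
              exact congrArg GW.connectedComponentMk (Subtype.ext hxσa)
            · rw [hs5 x hxv hxsv hxa hxσa] at hr
              have hy : y ≠ v ∧ y ≠ σ v := by rw [← hr]; exact (pW σ v hσ1 x).mpr hx
              rw [fYW x hx, fYW y hy]
              exact mkW _ _ (Or.inr hr)
  have compat : ∀ x y : Y, GY.Adj x y → fY x = fY y := by
    intro x y hadj
    rw [hGY, SimpleGraph.fromRel_adj] at hadj
    rcases hadj.2 with hr | hr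
    · exact aux x y hr
    · exact (aux y x hr).symm
  have adjY : ∀ x y : Y, x ≠ y → (h x = y ∨ σ'' x = y) →
      GY.connectedComponentMk x = GY.connectedComponentMk y := by
    intro x y hne hr
    apply SimpleGraph.ConnectedComponent.connectedComponentMk_eq_of_adj
    rw [hGY, SimpleGraph.fromRel_adj]
    exact ⟨hne, Or.inl hr⟩
  have path_a : GY.connectedComponentMk a = GY.connectedComponentMk (σ a) := by
    have h1 : GY.connectedComponentMk a = GY.connectedComponentMk v :=
      adjY a v hav (Or.inr hs2)
    have h2 : GY.connectedComponentMk v = GY.connectedComponentMk (σ v) :=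
      adjY v (σ v) (Ne.symm hσv) (Or.inl hv)
    have h3 : GY.connectedComponentMk (σ v) = GY.connectedComponentMk (σ a) :=
      adjY (σ v) (σ a) (Ne.symm hσasv) (Or.inr hs3)
    rw [h1, h2, h3]
  have compat2 : ∀ w w', GW.Adj w w' →
      GY.connectedComponentMk ↑w = GY.connectedComponentMk ↑w' := by
    intro w w' hadj
    rw [hGW, SimpleGraph.fromRel_adj] at hadj
    have hne : (↑w : Y) ≠ ↑w' := fun he => hadj.1 (Subtype.ext he)
    have main : ∀ w w' : {x : Y // x ≠ v ∧ x ≠ σ v}, (↑w : Y) ≠ ↑w' →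
        (g w = w' ∨ σ ↑w = ↑w') →
        GY.connectedComponentMk ↑w = GY.connectedComponentMk ↑w' := by
      intro w w' hne hr
      rcases hr with hr | hr
      · exact adjY _ _ hne (Or.inl (by rw [hg ↑w w.2, Subtype.eta, hr]))
      · by_cases hwa : (↑w : Y) = a
        · have : (↑w' : Y) = σ a := by rw [← hr, hwa]
          rw [show (GY.connectedComponentMk ↑w) = GY.connectedComponentMk a by rw [hwa],
            show (GY.connectedComponentMk ↑w') = GY.connectedComponentMk (σ a) by rw [this]]
          exact path_a
        · by_cases hwσa : (↑w : Y) = σ a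
          · have : (↑w' : Y) = a := by rw [← hr, hwσa, hσ1]
            rw [show (GY.connectedComponentMk ↑w) = GY.connectedComponentMk (σ a) by rw [hwσa],
              show (GY.connectedComponentMk ↑w') = GY.connectedComponentMk a by rw [this]]
            exact path_a.symm
          · exact adjY _ _ hne (Or.inr (by rw [hs5 ↑w w.2.1 w.2.2 hwa hwσa, hr]))
    rcases hadj.2 with (hr | hr) | (hr | hr)
    · exact main w w' hne (Or.inl hr)
    · exact main w w' hne (Or.inr (congrArg Subtype.val hr))
    · exact (main w' w hne.symm (Or.inl hr)).symm
    · exact (main w' w hne.symm (Or.inr (congrArg Subtype.val hr))).symm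
  have key : GY.ConnectedComponent ≃ GW.ConnectedComponent := by
    refine ⟨ccLift fY compat, ccLift (fun w => GY.connectedComponentMk ↑w) compat2, ?_, ?_⟩
    · apply SimpleGraph.ConnectedComponent.ind
      intro x
      rw [ccLift_mk]
      by_cases hxv : x = v
      · rw [hxv, fYv, ccLift_mk]
        exact (adjY v a (Ne.symm hav) (Or.inr hs1)).symm
      · by_cases hxsv : x = σ v
        · rw [hxsv, fYsv, ccLift_mk]
          exact (adjY (σ v) (σ a) (Ne.symm hσasv) (Or.inr hs3)).symm
        · rw [fYW x ⟨hxv, hxsv⟩, ccLift_mk]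
    · apply SimpleGraph.ConnectedComponent.ind
      intro w
      rw [ccLift_mk, ccLift_mk, fYW ↑w w.2]
  exact Nat.card_congr key
end main

lemma ccount_conj {Y : Type*} (π f σ : Equiv.Perm Y) :
    ccount (π * f * π⁻¹) (π * σ * π⁻¹) = ccount f σ := by
  apply Nat.card_congr
  apply Iso.connectedComponentEquiv
  apply Iso.symm
  refine ⟨(π : Y ≃ Y), ?_⟩
  intro x y
  simp only [SimpleGraph.fromRel_adj, Perm.mul_apply, Perm.inv_def, Equiv.symm_apply_apply, ne_eq,
    EmbeddingLike.apply_eq_iff_eq, coe_fn_mk]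

section induction
variable {Y : Type*} [Fintype Y] [DecidableEq Y]

lemma ccount_case_a (σ : Equiv.Perm Y) (v : Y) (hσ1 : ∀ x, σ (σ x) = x) (hσv : σ v ≠ v)
    (h : Equiv.Perm Y) (hv : h v = σ v) (hsv : h (σ v) = v)
    (g : Equiv.Perm {x : Y // x ≠ v ∧ x ≠ σ v})
    (hg : ∀ x (hx : x ≠ v ∧ x ≠ σ v), h x = ↑(g ⟨x, hx⟩)) :
    ccount h σ = ccount g (σ.subtypePerm (pW σ v hσ1)) + 1 := by
  classical
  set GY := SimpleGraph.fromRel fun x y => h x = y ∨ σ x = y with hGY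
  set GW := SimpleGraph.fromRel
    (fun x y : {x : Y // x ≠ v ∧ x ≠ σ v} => g x = y ∨ (σ.subtypePerm (pW σ v hσ1)) x = y)
    with hGW
  set fY : Y → GW.ConnectedComponent ⊕ Unit := fun x =>
    if hx : x ≠ v ∧ x ≠ σ v then Sum.inl (GW.connectedComponentMk ⟨x, hx⟩)
    else Sum.inr () with hfY
  have mkW : ∀ (w w' : {x : Y // x ≠ v ∧ x ≠ σ v}), (g w = w' ∨ σ ↑w = ↑w') →
      GW.connectedComponentMk w = GW.connectedComponentMk w' := by
    intro w w' hr
    by_cases he : w = w'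
    · rw [he]
    · apply SimpleGraph.ConnectedComponent.connectedComponentMk_eq_of_adj
      rw [hGW, SimpleGraph.fromRel_adj]
      refine ⟨he, Or.inl ?_⟩
      rcases hr with hr | hr
      · exact Or.inl hr
      · exact Or.inr (Subtype.ext hr)
  have aux : ∀ x y : Y, (h x = y ∨ σ x = y) → fY x = fY y := by
    intro x y hr
    by_cases hx : x ≠ v ∧ x ≠ σ v
    · have hy : y ≠ v ∧ y ≠ σ v := by
        rcases hr with hr | hr
        · rw [← hr, hg x hx]; exact (g ⟨x, hx⟩).2
        · rw [← hr]; exact ((pW σ v hσ1 x).mpr hx)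
      have : GW.connectedComponentMk ⟨x, hx⟩ = GW.connectedComponentMk ⟨y, hy⟩ := by
        apply mkW
        rcases hr with hr | hr
        · left; apply Subtype.ext; rw [← hg x hx, hr]
        · right; exact hr
      simp only [hfY, dif_pos hx, dif_pos hy, this]
    · have hxcase : x = v ∨ x = σ v := by
        by_cases h1 : x = v
        · exact Or.inl h1
        · right; by_contra h2; exact hx ⟨h1, h2⟩
      have hy : y = v ∨ y = σ v := by
        rcases hxcase with rfl | rfl
        · rcases hr with hr | hr
          · right; rw [← hr, hv]
          · right; rw [← hr]
        · rcases hr with hr | hr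
          · left; rw [← hr, hsv]
          · left; rw [← hr, hσ1]
      have fx : fY x = Sum.inr () := by
        rcases hxcase with rfl | rfl <;> simp [hfY]
      have fy : fY y = Sum.inr () := by
        rcases hy with rfl | rfl <;> simp [hfY]
      rw [fx, fy]
  have compat : ∀ x y : Y, GY.Adj x y → fY x = fY y := by
    intro x y hadj
    rw [hGY, SimpleGraph.fromRel_adj] at hadj
    rcases hadj.2 with hr | hr
    · exact aux x y hr
    · exact (aux y x hr).symm
  have compat2 : ∀ w w', GW.Adj w w' →
      GY.connectedComponentMk ↑w = GY.connectedComponentMk ↑w' := by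
    intro w w' hadj
    rw [hGW, SimpleGraph.fromRel_adj] at hadj
    apply SimpleGraph.ConnectedComponent.connectedComponentMk_eq_of_adj
    rw [hGY, SimpleGraph.fromRel_adj]
    refine ⟨fun he => hadj.1 (Subtype.ext he), ?_⟩
    rcases hadj.2 with (hr | hr) | (hr | hr)
    · exact Or.inl (Or.inl (by rw [hg ↑w w.2, Subtype.eta, hr]))
    · exact Or.inl (Or.inr (congrArg Subtype.val hr))
    · exact Or.inr (Or.inl (by rw [hg ↑w' w'.2, Subtype.eta, hr]))
    · exact Or.inr (Or.inr (congrArg Subtype.val hr))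
  have key : GY.ConnectedComponent ≃ GW.ConnectedComponent ⊕ Unit := by
    refine ⟨ccLift fY compat,
      Sum.elim (ccLift (fun w => GY.connectedComponentMk ↑w) compat2)
        (fun _ => GY.connectedComponentMk v), ?_, ?_⟩
    · apply SimpleGraph.ConnectedComponent.ind
      intro x
      by_cases hx : x ≠ v ∧ x ≠ σ v
      · rw [ccLift_mk]
        rw [show fY x = Sum.inl (GW.connectedComponentMk ⟨x, hx⟩) from dif_pos hx]
        simp
      · rw [ccLift_mk]
        rw [show fY x = Sum.inr () from dif_neg hx]
        simp only [Sum.elim_inr]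
        push_neg at hx
        by_cases hxv : x = v
        · rw [hxv]
        · rw [hx hxv]
          apply SimpleGraph.ConnectedComponent.connectedComponentMk_eq_of_adj
          rw [hGY, SimpleGraph.fromRel_adj]
          exact ⟨fun e => hσv e.symm, Or.inl (Or.inr rfl)⟩
    · rintro (c | ⟨⟩)
      · revert c
        apply SimpleGraph.ConnectedComponent.ind
        intro w
        simp only [Sum.elim_inl, ccLift_mk]
        rw [show fY ↑w = Sum.inl (GW.connectedComponentMk ⟨↑w, w.2⟩) from dif_pos w.2]
      · simp only [Sum.elim_inr, ccLift_mk]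
        rw [show fY v = Sum.inr () from dif_neg (by simp)]
  have : Nat.card GY.ConnectedComponent = Nat.card GW.ConnectedComponent + 1 := by
    rw [Nat.card_congr key, Nat.card_sum]
    simp
  exact this

lemma main_sum (D : ℝ) : ∀ (n : ℕ) (Y : Type) [Fintype Y] [DecidableEq Y] (σ : Equiv.Perm Y),
    (∀ x, σ (σ x) = x) → (∀ x, σ x ≠ x) → Fintype.card Y = 2 * n →
    ∑ f ∈ Finset.univ.filter
        (fun f : Equiv.Perm Y => (∀ x, f (f x) = x) ∧ ∀ x, f x ≠ x),
      D ^ ccount f σ = ∏ j ∈ Finset.range n, (D + 2 * j) := by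
  intro n
  induction n with
  | zero =>
    intro Y _ _ σ hσ1 hσ2 hcard
    have hY : IsEmpty Y := Fintype.card_eq_zero_iff.mp (by simpa using hcard)
    have h1 : ∀ f : Equiv.Perm Y, ccount f σ = 0 := by
      intro f
      have : IsEmpty (SimpleGraph.fromRel
          fun x y => f x = y ∨ σ x = y).ConnectedComponent :=
        ⟨fun c => SimpleGraph.ConnectedComponent.ind (fun w => isEmptyElim w) c⟩
      exact Nat.card_of_isEmpty
    have h2 : (Finset.univ.filter
        (fun f : Equiv.Perm Y => (∀ x, f (f x) = x) ∧ ∀ x, f x ≠ x)) = Finset.univ := by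
      apply Finset.filter_true_of_mem
      intro f _
      exact ⟨fun x => isEmptyElim x, fun x => isEmptyElim x⟩
    rw [h2]
    simp only [h1, pow_zero]
    rw [Finset.sum_const, Finset.card_univ, Fintype.card_perm]
    simp [hcard]
  | succ n ih =>
    intro Y _ _ σ hσ1 hσ2 hcard
    have hYne : Nonempty Y := Fintype.card_pos_iff.mp (by omega)
    obtain ⟨v⟩ := hYne
    have hσv : σ v ≠ v := hσ2 v
    set σ' : Equiv.Perm {x : Y // x ≠ v ∧ x ≠ σ v} := σ.subtypePerm (pW σ v hσ1) with hσ'def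
    have hσ'1 : ∀ w, σ' (σ' w) = w := fun w => Subtype.ext (hσ1 ↑w)
    have hσ'2 : ∀ w, σ' w ≠ w := fun w e => hσ2 ↑w (congrArg Subtype.val e)
    have hcardW : Fintype.card {x : Y // x ≠ v ∧ x ≠ σ v} = 2 * n := by
      have h2 : ({v, σ v} : Finset Y).card = 2 := by
        rw [Finset.card_insert_of_notMem (by simp [Ne.symm hσv]), Finset.card_singleton]
      rw [Fintype.card_subtype]
      have he : Finset.univ.filter (fun x : Y => x ≠ v ∧ x ≠ σ v)
          = Finset.univ \ {v, σ v} := by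
        ext x; simp [not_or]
      rw [he, Finset.card_sdiff_of_subset (Finset.subset_univ _), Finset.card_univ, h2, hcard]
      omega
    have hT := ih {x : Y // x ≠ v ∧ x ≠ σ v} σ' hσ'1 hσ'2 hcardW
    set T := ∑ g ∈ Finset.univ.filter
        (fun g : Equiv.Perm {x : Y // x ≠ v ∧ x ≠ σ v} =>
          (∀ x, g (g x) = x) ∧ ∀ x, g x ≠ x),
      D ^ ccount g σ' with hTdef
    rw [← Finset.sum_fiberwise_of_maps_to (g := fun f : Equiv.Perm Y => f v)
      (t := Finset.univ.erase v) (fun f hf => Finset.mem_erase.mpr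
        ⟨(Finset.mem_filter.mp hf).2.2 v, Finset.mem_univ _⟩)]
    have inner : ∀ a ∈ Finset.univ.erase v,
        ∑ f ∈ (Finset.univ.filter
            (fun f : Equiv.Perm Y => (∀ x, f (f x) = x) ∧ ∀ x, f x ≠ x)).filter
            (fun f => f v = a),
          D ^ ccount f σ = (if a = σ v then D else 1) * T := by
      intro a ha
      have hav : a ≠ v := (Finset.mem_erase.mp ha).1
      set τ := Equiv.swap a (σ v) with hτ
      have hτinv : τ⁻¹ = τ := Equiv.swap_inv a (σ v)
      have hτv : τ v = v := Equiv.swap_apply_of_ne_of_ne (Ne.symm hav) (Ne.symm hσv)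
      have hττ : ∀ x, τ (τ x) = x := fun x => Equiv.swap_apply_self a (σ v) x
      have hdec : ∀ f : Equiv.Perm Y, f ∈ (Finset.univ.filter
          (fun f : Equiv.Perm Y => (∀ x, f (f x) = x) ∧ ∀ x, f x ≠ x)).filter
          (fun f => f v = a) →
          (((∀ x, f (f x) = x) ∧ ∀ x, f x ≠ x) ∧ f v = a) := by
        intro f hf
        have := Finset.mem_filter.mp hf
        exact ⟨(Finset.mem_filter.mp this.1).2, this.2⟩
      have hkey : ∀ f : Equiv.Perm Y, (∀ x, f (f x) = x) → (∀ x, f x ≠ x) → f v = a →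
          (τ * f * τ) v = σ v ∧ (τ * f * τ) (σ v) = v ∧
          (∀ x, (τ * f * τ) ((τ * f * τ) x) = x) ∧ (∀ x, (τ * f * τ) x ≠ x) := by
        intro f hf1 hf2 hfv
        have happ : ∀ x, (τ * f * τ) x = τ (f (τ x)) := fun x => rfl
        refine ⟨?_, ?_, ?_, ?_⟩
        · rw [happ, hτv, hfv, hτ]; exact Equiv.swap_apply_left a (σ v)
        · have hfa : f a = v := by rw [← hfv, hf1]
          rw [happ, hτ, Equiv.swap_apply_right, hfa, ← hτ, hτv]
        · intro x; rw [happ, happ, hττ, hf1, hττ]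
        · intro x he
          rw [happ] at he
          have := congrArg τ he
          rw [hττ] at this
          exact hf2 (τ x) this
      have HW : ∀ f : Equiv.Perm Y, (∀ x, f (f x) = x) → (∀ x, f x ≠ x) → f v = a →
          ∀ x, ((τ * f * τ) x ≠ v ∧ (τ * f * τ) x ≠ σ v) ↔ (x ≠ v ∧ x ≠ σ v) := by
        intro f hf1 hf2 hfv x
        refine Iff.symm ?_
        obtain ⟨k1, k2, k3, k4⟩ := hkey f hf1 hf2 hfv
        constructor
        · rintro ⟨x1, x2⟩
          constructor
          · intro e
            have hx := k3 x
            rw [e, k1] at hx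
            exact x2 hx.symm
          · intro e
            have hx := k3 x
            rw [e, k2] at hx
            exact x1 hx.symm
        · rintro ⟨x1, x2⟩
          constructor
          · intro e; apply x2; rw [e, k1]
          · intro e; apply x1; rw [e, k2]
      have h0fact : ∀ g : Equiv.Perm {x : Y // x ≠ v ∧ x ≠ σ v},
          ((Equiv.Perm.ofSubtype g * Equiv.swap v (σ v)) v = σ v) ∧
          ((Equiv.Perm.ofSubtype g * Equiv.swap v (σ v)) (σ v) = v) ∧
          (∀ x (hx : x ≠ v ∧ x ≠ σ v),
            (Equiv.Perm.ofSubtype g * Equiv.swap v (σ v)) x = ↑(g ⟨x, hx⟩)) := by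
        intro g
        refine ⟨?_, ?_, ?_⟩
        · show Equiv.Perm.ofSubtype g (Equiv.swap v (σ v) v) = σ v
          rw [Equiv.swap_apply_left]
          exact Equiv.Perm.ofSubtype_apply_of_not_mem g (by simp)
        · show Equiv.Perm.ofSubtype g (Equiv.swap v (σ v) (σ v)) = v
          rw [Equiv.swap_apply_right]
          exact Equiv.Perm.ofSubtype_apply_of_not_mem g (by simp)
        · intro x hx
          show Equiv.Perm.ofSubtype g (Equiv.swap v (σ v) x) = _
          rw [Equiv.swap_apply_of_ne_of_ne hx.1 hx.2,
            Equiv.Perm.ofSubtype_apply_of_mem g hx]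
      have step1 : ∑ f ∈ (Finset.univ.filter
            (fun f : Equiv.Perm Y => (∀ x, f (f x) = x) ∧ ∀ x, f x ≠ x)).filter
            (fun f => f v = a),
          D ^ ccount f σ
          = ∑ g ∈ Finset.univ.filter
            (fun g : Equiv.Perm {x : Y // x ≠ v ∧ x ≠ σ v} =>
              (∀ x, g (g x) = x) ∧ ∀ x, g x ≠ x),
          D ^ (ccount g σ' + if a = σ v then 1 else 0) := by
        refine Finset.sum_bij'
          (fun f hf => Equiv.Perm.subtypePerm (τ * f * τ)
            (HW f (hdec f hf).1.1 (hdec f hf).1.2 (hdec f hf).2))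
          (fun g _ => τ * (Equiv.Perm.ofSubtype g * Equiv.swap v (σ v)) * τ)
          ?_ ?_ ?_ ?_ ?_
        · -- hi
          intro f hf
          obtain ⟨⟨hf1, hf2⟩, hfv⟩ := hdec f hf
          obtain ⟨k1, k2, k3, k4⟩ := hkey f hf1 hf2 hfv
          refine Finset.mem_filter.mpr ⟨Finset.mem_univ _, fun w => Subtype.ext (k3 ↑w),
            fun w e => k4 ↑w (congrArg Subtype.val e)⟩
        · -- hj
          intro g hg
          obtain ⟨hg1, hg2⟩ := (Finset.mem_filter.mp hg).2
          obtain ⟨m1, m2, m3⟩ := h0fact g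
          set h0 := Equiv.Perm.ofSubtype g * Equiv.swap v (σ v) with hh0
          have h0inv : ∀ x, h0 (h0 x) = x := by
            intro x
            by_cases hxv : x = v
            · rw [hxv, m1, m2]
            · by_cases hxsv : x = σ v
              · rw [hxsv, m2, m1]
              · rw [m3 x ⟨hxv, hxsv⟩, m3 _ (g ⟨x, hxv, hxsv⟩).2]
                exact congrArg Subtype.val (hg1 ⟨x, hxv, hxsv⟩)
          have h0fpf : ∀ x, h0 x ≠ x := by
            intro x
            by_cases hxv : x = v
            · rw [hxv, m1]; exact hσv
            · by_cases hxsv : x = σ v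
              · rw [hxsv, m2]; exact Ne.symm hσv
              · rw [m3 x ⟨hxv, hxsv⟩]
                exact fun e => hg2 ⟨x, hxv, hxsv⟩ (Subtype.ext e)
          refine Finset.mem_filter.mpr ⟨Finset.mem_filter.mpr
            ⟨Finset.mem_univ _, ?_, ?_⟩, ?_⟩
          · intro x
            show τ (h0 (τ (τ (h0 (τ x))))) = x
            rw [hττ, h0inv, hττ]
          · intro x e
            have e' : τ (h0 (τ x)) = x := e
            have := congrArg τ e'
            rw [hττ] at this
            exact h0fpf (τ x) this
          · show τ (h0 (τ v)) = a
            rw [hτv, m1, hτ, Equiv.swap_apply_right]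
        · -- left inverse
          intro f hf
          obtain ⟨⟨hf1, hf2⟩, hfv⟩ := hdec f hf
          obtain ⟨k1, k2, k3, k4⟩ := hkey f hf1 hf2 hfv
          obtain ⟨m1, m2, m3⟩ := h0fact (Equiv.Perm.subtypePerm (τ * f * τ)
            (HW f (hdec f hf).1.1 (hdec f hf).1.2 (hdec f hf).2))
          have inner_eq : ∀ y, (Equiv.Perm.ofSubtype (Equiv.Perm.subtypePerm (p := fun x => x ≠ v ∧ x ≠ σ v) (τ * f * τ)
              (HW f (hdec f hf).1.1 (hdec f hf).1.2 (hdec f hf).2))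
              * Equiv.swap v (σ v)) y = (τ * f * τ) y := by
            intro y
            by_cases hyv : y = v
            · rw [hyv, m1, k1]
            · by_cases hysv : y = σ v
              · rw [hysv, m2, k2]
              · rw [m3 y ⟨hyv, hysv⟩]; rfl
          apply Equiv.ext
          intro x
          simp only [Equiv.Perm.mul_apply]
          have := inner_eq (τ x)
          simp only [Equiv.Perm.mul_apply] at this
          rw [this, hττ x]
          exact hττ (f x)
        · -- right inverse
          intro g hg
          obtain ⟨m1, m2, m3⟩ := h0fact g
          apply Equiv.ext
          intro w
          apply Subtype.ext
          show (τ * (τ * (Equiv.Perm.ofSubtype g * Equiv.swap v (σ v)) * τ) * τ) ↑w = ↑(g w)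
          simp only [Equiv.Perm.mul_apply]
          rw [hττ ((w : Y))]
          have := m3 ↑w w.2
          simp only [Equiv.Perm.mul_apply] at this
          rw [this, hττ]
        · -- values
          intro f hf
          obtain ⟨⟨hf1, hf2⟩, hfv⟩ := hdec f hf
          obtain ⟨k1, k2, k3, k4⟩ := hkey f hf1 hf2 hfv
          have e1 : τ * (τ * f * τ) * τ⁻¹ = f := by
            rw [hτinv]
            apply Equiv.ext
            intro x
            simp only [Equiv.Perm.mul_apply]
            rw [hττ, hττ]
          have e2 : τ * (τ * σ * τ) * τ⁻¹ = σ := by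
            rw [hτinv]
            apply Equiv.ext
            intro x
            simp only [Equiv.Perm.mul_apply]
            rw [hττ, hττ]
          have conj1 : ccount f σ = ccount (τ * f * τ) (τ * σ * τ) := by
            have hc := ccount_conj τ (τ * f * τ) (τ * σ * τ)
            rw [e1, e2] at hc
            exact hc
          by_cases hb : a = σ v
          · have hτ1 : τ = 1 := by
              apply Equiv.ext
              intro x
              rw [hτ, hb, Equiv.swap_self]
              rfl
            have hσeq : τ * σ * τ = σ := by rw [hτ1, one_mul, mul_one]
            have hca := ccount_case_a σ v hσ1 hσv (τ * f * τ) k1 k2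
                (Equiv.Perm.subtypePerm (τ * f * τ)
                  (HW f (hdec f hf).1.1 (hdec f hf).1.2 (hdec f hf).2))
                (fun x hx => rfl)
            rw [conj1, hσeq, hca, if_pos hb]
          · have hcb := ccount_case_b σ v hσ1 hσv a hav hb (hσ2 a) (τ * f * τ) k1 k2
              (Equiv.Perm.subtypePerm (τ * f * τ)
                (HW f (hdec f hf).1.1 (hdec f hf).1.2 (hdec f hf).2))
              (fun x hx => rfl)
            rw [← hτ] at hcb
            rw [if_neg hb, add_zero, conj1]
            exact congrArg (fun m => D ^ m) hcb
      rw [step1]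
      by_cases hb : a = σ v
      · rw [Finset.sum_congr rfl (fun g _ => by rw [if_pos hb, pow_succ]), ← Finset.sum_mul,
          ← hTdef, if_pos hb, mul_comm]
      · rw [Finset.sum_congr rfl (fun g _ => by rw [if_neg hb, add_zero]), ← hTdef,
          if_neg hb, one_mul]
    rw [Finset.sum_congr rfl inner, ← Finset.sum_mul]
    have hsum : (∑ a ∈ Finset.univ.erase v, (if a = σ v then D else 1)) = D + 2 * n := by
      have hmem : σ v ∈ Finset.univ.erase v := Finset.mem_erase.mpr ⟨hσv, Finset.mem_univ _⟩
      have step : ∀ a ∈ Finset.univ.erase v, (if a = σ v then D else 1)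
          = (if a = σ v then D - 1 else 0) + 1 := by intro a _; split <;> ring
      rw [Finset.sum_congr rfl step, Finset.sum_add_distrib,
        Finset.sum_ite_eq' (Finset.univ.erase v) (σ v) (fun _ => D - 1), if_pos hmem,
        Finset.sum_const, Finset.card_erase_of_mem (Finset.mem_univ v), Finset.card_univ,
        hcard]
      have h21 : 2 * (n + 1) - 1 = 2 * n + 1 := by omega
      rw [h21]
      push_cast
      ring
    rw [hsum, Finset.prod_range_succ, hT]
    push_cast
    ring
end induction

lemma flip_invol (k : ℕ) : ∀ x : Fin (k + k), finAddFlip (finAddFlip x) = x := by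
  rintro ⟨m, hm⟩
  by_cases h : m < k
  · rw [finAddFlip_apply_mk_left h, finAddFlip_apply_mk_right (Nat.le_add_right k m)]
    apply Fin.ext
    simp
  · rw [finAddFlip_apply_mk_right (le_of_not_gt h) hm,
      finAddFlip_apply_mk_left (by omega : m - k < k)]
    apply Fin.ext
    simp
    omega

lemma flip_fpf (k : ℕ) : ∀ x : Fin (k + k), finAddFlip x ≠ x := by
  rintro ⟨m, hm⟩ he
  by_cases h : m < k
  · rw [finAddFlip_apply_mk_left h] at he
    have := congrArg Fin.val he
    simp at this
    omega
  · rw [finAddFlip_apply_mk_right (le_of_not_gt h) hm] at he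
    have := congrArg Fin.val he
    simp at this
    omega

/-- Identify perfect matchings of `[2k]` with fixed-point-free involutions `f` of
`Fin (k + k)`; the fixed matching `M₀ = {{1,k+1},…,{k,2k}}` is `finAddFlip`.
Then `∑_M D^{cc(M ∪ M₀)} = (D + 2k-2)(D + 2k-4) ⋯ (D+2) D = ∏_{j=0}^{k-1} (D + 2j)`,
where `cc(M ∪ M₀)` is the number of connected components of the graph whose edges
are those of `M` and of `M₀`. -/
theorem stmt6 (k : ℕ) (D : ℝ) :
    ∑ f ∈ Finset.univ.filter
        (fun f : Equiv.Perm (Fin (k + k)) => (∀ x, f (f x) = x) ∧ ∀ x, f x ≠ x),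
      D ^ Nat.card
        (SimpleGraph.fromRel fun x y => f x = y ∨ finAddFlip x = y).ConnectedComponent
      = ∏ j ∈ Finset.range k, (D + 2 * j) := by
  have h := main_sum D k (Fin (k + k)) finAddFlip (flip_invol k) (flip_fpf k)
    (by rw [Fintype.card_fin]; omega)
  convert h using 2
  ext f
  simp only [Finset.mem_filter]
  rfl
end

section
/- For all real $\theta$ with $|\theta| \le \pi$: $(2\sin(\theta/2))^2 \le \theta^2 \le (2\sin(\theta/2))^2 + (2\sin(\theta/2))^4$. -/
open Real

lemma key_sin (x : ℝ) (h0 : 0 ≤ x) (h1 : x ≤ π / 2) :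
    x ^ 2 ≤ Real.sin x ^ 2 + 4 * Real.sin x ^ 4 := by
  have hpil : (3.14 : ℝ) < π := Real.pi_gt_d2
  have hpiu : π < 3.15 := Real.pi_lt_d2
  have hlin : 2 / π * x ≤ Real.sin x := Real.mul_le_sin h0 h1
  have hs0 : 0 ≤ Real.sin x := Real.sin_nonneg_of_nonneg_of_le_pi h0 (by linarith)
  have hpi0 : (0 : ℝ) < π := by linarith
  rcases le_or_gt x 1 with hx1 | hx1
  · rcases eq_or_lt_of_le h0 with rfl | hx0
    · simp
    have hcube : x - x ^ 3 / 4 < Real.sin x := by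
      have := Real.sin_gt_sub_cube hx0; nlinarith [pow_nonneg h0 3]
    have h2 : 2 / π * x ≥ 0.63 * x := by
      have : (2:ℝ) / π ≥ 0.63 := by
        rw [ge_iff_le, le_div_iff₀ hpi0]; nlinarith
      nlinarith
    have hs2 : Real.sin x ≥ 0.63 * x := by linarith
    have hpos : 0 ≤ x - x ^ 3 / 4 := by nlinarith [mul_nonneg (mul_nonneg h0 (by linarith : (0:ℝ) ≤ 1 - x)) (by linarith : (0:ℝ) ≤ 1 + x)]
    have hsq : (x - x ^ 3 / 4) ^ 2 ≤ Real.sin x ^ 2 :=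
      pow_le_pow_left₀ hpos hcube.le 2
    have h4 : (0.63 * x) ^ 4 ≤ Real.sin x ^ 4 :=
      pow_le_pow_left₀ (by positivity) hs2 4
    nlinarith [hsq, h4, sq_nonneg (x ^ 2), sq_nonneg (x ^ 3), pow_nonneg h0 4, pow_nonneg h0 6]
  · have hx1' : (1:ℝ) ≤ x * x := by nlinarith
    have h2 : Real.sin x ≥ 0.63 * x := by
      have : (2:ℝ) / π ≥ 0.63 := by
        rw [ge_iff_le, le_div_iff₀ hpi0]; nlinarith
      nlinarith
    have h4 : Real.sin x ^ 4 ≥ (0.63 * x) ^ 4 :=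
      pow_le_pow_left₀ (by nlinarith) h2 4
    have hsq : (0.63 * x) ^ 2 ≤ Real.sin x ^ 2 :=
      pow_le_pow_left₀ (by nlinarith) h2 2
    nlinarith [hsq, h4, sq_nonneg x, sq_nonneg (x * x - 1)]

lemma key (t : ℝ) (h0 : 0 ≤ t) (h1 : t ≤ π) :
    (2 * Real.sin (t / 2)) ^ 2 ≤ t ^ 2 ∧
      t ^ 2 ≤ (2 * Real.sin (t / 2)) ^ 2 + (2 * Real.sin (t / 2)) ^ 4 := by
  have hs0 : 0 ≤ Real.sin (t / 2) :=
    Real.sin_nonneg_of_nonneg_of_le_pi (by linarith) (by linarith [Real.pi_pos])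
  have hle : Real.sin (t / 2) ≤ t / 2 := Real.sin_le (by linarith)
  constructor
  · nlinarith
  · have := key_sin (t / 2) (by linarith) (by linarith)
    nlinarith

/-- For `|θ| ≤ π`: `(2 sin(θ/2))² ≤ θ² ≤ (2 sin(θ/2))² + (2 sin(θ/2))⁴`. -/
theorem stmt8 (θ : ℝ) (h : |θ| ≤ Real.pi) :
    (2 * Real.sin (θ / 2)) ^ 2 ≤ θ ^ 2 ∧
      θ ^ 2 ≤ (2 * Real.sin (θ / 2)) ^ 2 + (2 * Real.sin (θ / 2)) ^ 4 := by
  rcases abs_le.mp h with ⟨hl, hr⟩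
  rcases le_or_gt 0 θ with hθ | hθ
  · exact key θ hθ hr
  · have := key (-θ) (by linarith) (by linarith)
    have hsin : Real.sin (-θ / 2) = -Real.sin (θ / 2) := by
      rw [neg_div, Real.sin_neg]
    rw [hsin] at this
    constructor <;> nlinarith [this.1, this.2]
end
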